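/- arXiv:1808.00038 — 2 statements merged into one kernel-verified Lean document; each statement's English description precedes it below -/
import Mathlib

section
/- Let χ_c, r be integers with r ≥ 0, let w₁,...,w_r be positive reals, and let ρ > 0. Define F(ρ) = 1 - ∑_{I ⊆ {1,...,r}} (-1)^{|I|} · B(⌊ρ - w_I⌋), where w_I = ∑_{i∈I} w_i, B(m) = C(m - χ_c + r, m) for m ≥ 0 (generalized binomial coefficient) and B(m) = 0 for m < 0. If w_i = 1 for all i, then F(ρ) = 1 - C(⌊ρ⌋ - χ_c, ⌊ρ⌋). -/
open Finset in
/-- `B(m) = C(m - χ_c + r, m)` for `m ≥ 0`, and `0` for `m < 0`. -/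
noncomputable def weightedB (χc : ℤ) (r : ℕ) (m : ℤ) : ℤ :=
  if m < 0 then 0 else Ring.choose (m - χc + r) m.toNat

open Finset in
/-- `F(ρ) = 1 - ∑_{I ⊆ {1,…,r}} (-1)^{|I|} B(⌊ρ - w_I⌋)` (Theorem 1.1). -/
noncomputable def weightedF (χc : ℤ) (r : ℕ) (w : Fin r → ℝ) (ρ : ℝ) : ℤ :=
  1 - ∑ I : Finset (Fin r), (-1) ^ I.card * weightedB χc r ⌊ρ - ∑ i ∈ I, w i⌋

/-- Pascal-type difference identity for `weightedB`. -/
lemma weightedB_sub (χc : ℤ) (s : ℕ) (m : ℤ) :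
    weightedB χc (s + 1) m - weightedB χc (s + 1) (m - 1) = weightedB χc s m := by
  unfold weightedB
  rcases lt_trichotomy m 0 with hm | hm | hm
  · rw [if_pos hm, if_pos (by omega), if_pos hm]; ring
  · subst hm
    norm_num
  · rw [if_neg (by omega), if_neg (by omega), if_neg (by omega)]
    obtain ⟨k, hk⟩ : ∃ k : ℕ, m.toNat = k + 1 := ⟨m.toNat - 1, by omega⟩
    have h2 : (m - 1).toNat = k := by omega
    rw [hk, h2]
    have h3 : (m : ℤ) - χc + (s + 1 : ℕ) = (m - χc + s) + 1 := by push_cast; ring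
    have h4 : (m : ℤ) - 1 - χc + (s + 1 : ℕ) = (m - χc + s) := by push_cast; ring
    have h5 : (m : ℤ) - χc + (s : ℕ) = (m - χc + s) := by ring
    rw [h3, h4, h5, Ring.choose_succ_succ]
    ring

open Finset in
/-- Finite-difference step for alternating binomial sums. -/
lemma diff_step (g : ℤ → ℤ) (r : ℕ) (n : ℤ) :
    ∑ k ∈ Finset.range (r + 2), (-1 : ℤ) ^ k * ((r + 1).choose k) * g (n - k)
    = ∑ k ∈ Finset.range (r + 1), (-1 : ℤ) ^ k * (r.choose k) * (g (n - k) - g (n - k - 1)) := by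
  rw [Finset.sum_range_succ']
  have h1 : ∀ i ∈ Finset.range (r + 1),
      (-1 : ℤ) ^ (i + 1) * ((r + 1).choose (i + 1)) * g (n - (i + 1 : ℕ))
      = -((-1) ^ i * (r.choose i) * g (n - i - 1))
        + (-1) ^ (i + 1) * (r.choose (i + 1)) * g (n - ((i + 1 : ℕ) : ℤ)) := by
    intro i _
    rw [Nat.choose_succ_succ']
    push_cast
    ring
  rw [Finset.sum_congr rfl h1, Finset.sum_add_distrib]
  have h2 : ∑ i ∈ Finset.range (r + 1), (-1 : ℤ) ^ (i + 1) * (r.choose (i + 1)) * g (n - ((i + 1 : ℕ) : ℤ))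
      + (-1 : ℤ) ^ 0 * (r.choose 0) * g (n - (0 : ℕ)) =
      ∑ k ∈ Finset.range (r + 2), (-1 : ℤ) ^ k * (r.choose k) * g (n - k) :=
    (Finset.sum_range_succ' (fun k => (-1 : ℤ) ^ k * (r.choose k) * g (n - k)) (r + 1)).symm
  have h3 : ∑ k ∈ Finset.range (r + 2), (-1 : ℤ) ^ k * (r.choose k) * g (n - k)
      = ∑ k ∈ Finset.range (r + 1), (-1 : ℤ) ^ k * (r.choose k) * g (n - k) := by
    rw [Finset.sum_range_succ, Nat.choose_succ_self]
    simp
  have hfirst : ((-1 : ℤ) ^ 0 * ((r + 1).choose 0) * g (n - (0 : ℕ)))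
      = (-1 : ℤ) ^ 0 * (r.choose 0) * g (n - (0 : ℕ)) := by simp
  rw [hfirst, add_assoc, h2, h3]
  rw [← Finset.sum_add_distrib]
  exact Finset.sum_congr rfl fun k _ => by ring

/-- The `r`-fold alternating sum of `weightedB χc r` collapses to `weightedB χc 0`. -/
lemma alt_sum (χc : ℤ) : ∀ (r : ℕ) (n : ℤ),
    ∑ k ∈ Finset.range (r + 1), (-1 : ℤ) ^ k * (r.choose k) * weightedB χc r (n - k)
    = weightedB χc 0 n := by
  intro r
  induction r with
  | zero => intro n; simp
  | succ r ih =>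
    intro n
    have : r + 1 + 1 = r + 2 := rfl
    rw [this, diff_step (weightedB χc (r + 1)) r n]
    have : ∀ k ∈ Finset.range (r + 1),
        (-1 : ℤ) ^ k * (r.choose k) * (weightedB χc (r + 1) (n - k) - weightedB χc (r + 1) (n - k - 1))
        = (-1 : ℤ) ^ k * (r.choose k) * weightedB χc r (n - k) := by
      intro k _
      rw [weightedB_sub]
    rw [Finset.sum_congr rfl this, ih n]

/-- If all weights equal 1, the weighted formula reduces to the unweighted
formula `1 - C(⌊ρ⌋ - χ_c, ⌊ρ⌋)`. -/
theorem weightedF_all_weights_one (χc : ℤ) (r : ℕ) (w : Fin r → ℝ)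
    (hw : ∀ i, 0 < w i) (ρ : ℝ) (hρ : 0 < ρ) (h1 : ∀ i, w i = 1) :
    weightedF χc r w ρ = 1 - Ring.choose (⌊ρ⌋ - χc) ⌊ρ⌋.toNat := by
  unfold weightedF
  have hfloor : ∀ I : Finset (Fin r), ⌊ρ - ∑ i ∈ I, w i⌋ = ⌊ρ⌋ - I.card := by
    intro I
    have : ∑ i ∈ I, w i = (I.card : ℝ) := by
      rw [Finset.sum_congr rfl fun i _ => h1 i]
      simp
    rw [this]
    rw [show ρ - (I.card : ℝ) = ρ + (-(I.card : ℤ) : ℤ) by push_cast; ring, Int.floor_add_intCast]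
    ring
  have hsum : ∑ I : Finset (Fin r), (-1 : ℤ) ^ I.card * weightedB χc r ⌊ρ - ∑ i ∈ I, w i⌋
      = ∑ k ∈ Finset.range (r + 1), (-1 : ℤ) ^ k * (r.choose k) * weightedB χc r (⌊ρ⌋ - k) := by
    have h0 : ∀ I : Finset (Fin r), (-1 : ℤ) ^ I.card * weightedB χc r ⌊ρ - ∑ i ∈ I, w i⌋
        = (-1 : ℤ) ^ I.card * weightedB χc r (⌊ρ⌋ - I.card) := fun I => by rw [hfloor]
    rw [Finset.sum_congr rfl fun I _ => h0 I]
    rw [show (Finset.univ : Finset (Finset (Fin r))) = (Finset.univ : Finset (Fin r)).powerset by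
      simp, Finset.sum_powerset]
    simp only [Finset.card_univ, Fintype.card_fin]
    refine Finset.sum_congr rfl fun k _ => ?_
    have := Finset.sum_powersetCard k (Finset.univ : Finset (Fin r))
      (fun c => (-1 : ℤ) ^ c * weightedB χc r (⌊ρ⌋ - c))
    simp only [Finset.card_univ, Fintype.card_fin] at this
    rw [this, nsmul_eq_mul]
    ring
  rw [hsum, alt_sum]
  have hn : (0 : ℤ) ≤ ⌊ρ⌋ := Int.floor_nonneg.mpr hρ.le
  unfold weightedB
  rw [if_neg (by omega)]
  norm_num
end

section
/- Let χ_c, r be integers with r ≥ 1, ρ > 0 real, and weights w₁,...,w_r > 0 with w_r = 1. Define F_r(ρ; w₁,...,w_r; χ_c) = 1 - ∑_{I ⊆ {1,...,r}} (-1)^{|I|} · B_r(⌊ρ - w_I⌋) where B_r(m) = C(m - χ_c + r, m) for m ≥ 0 and 0 for m < 0. Then F_r(ρ; w₁,...,w_{r-1},1; χ_c) = F_{r-1}(ρ; w₁,...,w_{r-1}; χ_c), where F_{r-1} uses B_{r-1}(m) = C(m - χ_c + r - 1, m). -/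
/-- Pascal's rule for `weightedB`. -/
lemma weightedB_pascal (χc : ℤ) (r : ℕ) (m : ℤ) :
    weightedB χc (r + 1) m = weightedB χc (r + 1) (m - 1) + weightedB χc r m := by
  unfold weightedB
  rcases lt_trichotomy m 0 with h | h | h
  · have h1 : m - 1 < 0 := by omega
    simp [h, h1]
  · subst h
    norm_num [Ring.choose_zero_right]
  · have h0 : ¬ m < 0 := by omega
    have h1 : ¬ m - 1 < 0 := by omega
    rw [if_neg h0, if_neg h1, if_neg h0]
    have hk : m.toNat = (m - 1).toNat + 1 := by omega
    have e1 : m - χc + ((r : ℤ) + 1) = (m - χc + r) + 1 := by ring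
    have e2 : m - 1 - χc + ((r : ℤ) + 1) = m - χc + r := by ring
    push_cast
    rw [hk, e1, e2, Ring.choose_succ_succ]

open Finset in
lemma sum_powerset_map_aux {α β M : Type*} [DecidableEq β] [AddCommMonoid M]
    (e : α ↪ β) (s : Finset α) (f : Finset β → M) :
    ∑ t ∈ (s.map e).powerset, f t = ∑ t ∈ s.powerset, f (t.map e) := by
  refine (Finset.sum_bij (fun t _ => t.map e) ?_ ?_ ?_ ?_).symm
  · intro t ht
    rw [Finset.mem_powerset] at ht ⊢
    exact Finset.map_subset_map.2 ht
  · intro a _ b _ hab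
    exact Finset.map_injective e hab
  · intro t ht
    simp only [mem_powerset] at ht
    obtain ⟨u, hu, rfl⟩ := Finset.subset_map_iff.1 ht
    exact ⟨u, Finset.mem_powerset.2 hu, rfl⟩
  · intro t _
    rfl

/-- A singular point of weight 1 is not singular: it can be removed from the
formula of Theorem 1.1 without changing the value. -/
theorem weightedF_drop_weight_one (χc : ℤ) (r : ℕ) (w : Fin (r + 1) → ℝ)
    (hw : ∀ i, 0 < w i) (ρ : ℝ) (hρ : 0 < ρ) (hlast : w (Fin.last r) = 1) :
    weightedF χc (r + 1) w ρ = weightedF χc r (w ∘ Fin.castSucc) ρ := by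
  classical
  unfold weightedF
  have hnotmem : Fin.last r ∉ (Finset.univ : Finset (Fin r)).map Fin.castSuccEmb := by
    simp [Fin.castSuccEmb]
    intro i
    exact (Fin.castSucc_lt_last i).ne
  have key : ∑ I : Finset (Fin (r + 1)),
        (-1) ^ I.card * weightedB χc (r + 1) ⌊ρ - ∑ i ∈ I, w i⌋
      = ∑ I : Finset (Fin r),
        (-1) ^ I.card * weightedB χc r ⌊ρ - ∑ i ∈ I, (w ∘ Fin.castSucc) i⌋ := by
    rw [← Finset.powerset_univ, Fin.univ_castSuccEmb, Finset.cons_eq_insert,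
      Finset.sum_powerset_insert hnotmem, sum_powerset_map_aux, sum_powerset_map_aux,
      Finset.powerset_univ, ← Finset.sum_add_distrib]
    apply Finset.sum_congr rfl
    intro J _
    have hJcard : (J.map Fin.castSuccEmb).card = J.card := Finset.card_map _
    have hJnot : Fin.last r ∉ J.map Fin.castSuccEmb := by
      intro h
      exact hnotmem (Finset.mem_map.2 (by
        obtain ⟨i, _, hi⟩ := Finset.mem_map.1 h
        exact ⟨i, Finset.mem_univ i, hi⟩))
    have hsum : ∑ i ∈ J.map Fin.castSuccEmb, w i = ∑ i ∈ J, (w ∘ Fin.castSucc) i := by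
      rw [Finset.sum_map]
      rfl
    have hins : ∑ i ∈ insert (Fin.last r) (J.map Fin.castSuccEmb), w i
        = (∑ i ∈ J, (w ∘ Fin.castSucc) i) + 1 := by
      rw [Finset.sum_insert hJnot, hsum, hlast]
      ring
    rw [Finset.card_insert_of_notMem hJnot, hJcard, hsum, hins]
    have hfloor : ⌊ρ - ((∑ i ∈ J, (w ∘ Fin.castSucc) i) + 1)⌋
        = ⌊ρ - ∑ i ∈ J, (w ∘ Fin.castSucc) i⌋ - 1 := by
      rw [show ρ - ((∑ i ∈ J, (w ∘ Fin.castSucc) i) + 1)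
          = (ρ - ∑ i ∈ J, (w ∘ Fin.castSucc) i) - 1 by ring, Int.floor_sub_one]
    rw [hfloor, weightedB_pascal χc r ⌊ρ - ∑ i ∈ J, (w ∘ Fin.castSucc) i⌋]
    ring
  rw [key]
end
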